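/- Let G be a subgroup of the group of permutations of Fin n, acting on Boolean assignments by x ↦ x ∘ π. Every orbit of this action on Fin n → Bool contains exactly one assignment x satisfying ∀ π ∈ G, PC(π, x), namely the unique lexicographically least element of the orbit. -/

import Mathlib

/-- The permutation constraint `PC(π, x)` for a permutation `π` of `Fin n` and a
Boolean assignment `x : Fin n → Bool` (with `false < true`):
for every `i`, if `x j = x (π j)` for all `j < i`, then `x i ≤ x (π i)`. -/
def PC {n : ℕ} (π : Equiv.Perm (Fin n)) (x : Fin n → Bool) : Prop :=
  ∀ i : Fin n, (∀ j : Fin n, j < i → x j = x (π j)) → x i ≤ x (π i)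

/-- Lexicographic order on Boolean assignments `Fin n → Bool`, index `0` being the
most significant position and `false < true`. -/
def lexLe {n : ℕ} (x y : Fin n → Bool) : Prop :=
  x = y ∨ ∃ i : Fin n, (∀ j : Fin n, j < i → x j = y j) ∧ x i < y i

noncomputable instance lexBoolLinearOrder (n : ℕ) : LinearOrder (Lex (Fin n → Bool)) :=
  @Pi.Lex.linearOrder (Fin n) (fun _ => Bool)
    Fin.instLinearOrder (inferInstanceAs (WellFoundedLT (Fin n))) (fun _ => inferInstance)

lemma lexLe_iff {n : ℕ} {x y : Fin n → Bool} : lexLe x y ↔ toLex x ≤ toLex y := by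
  rw [le_iff_lt_or_eq]
  constructor
  · rintro (h | ⟨i, h1, h2⟩)
    · exact Or.inr (congrArg toLex h)
    · exact Or.inl ⟨i, h1, h2⟩
  · rintro (⟨i, h1, h2⟩ | h)
    · exact Or.inr ⟨i, h1, h2⟩
    · exact Or.inl (by exact toLex.injective h)

lemma pc_iff {n : ℕ} (σ : Equiv.Perm (Fin n)) (y : Fin n → Bool) :
    PC σ y ↔ lexLe y (fun i => y (σ i)) := by
  constructor
  · intro hpc
    by_cases h : y = fun i => y (σ i)
    · exact Or.inl h
    · have hne : ∃ i, y i ≠ y (σ i) := by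
        by_contra hc
        push_neg at hc
        exact h (funext hc)
      classical
      set S : Finset (Fin n) := Finset.univ.filter (fun i => y i ≠ y (σ i)) with hS
      have hSne : S.Nonempty := by
        obtain ⟨i, hi⟩ := hne
        exact ⟨i, by simp [hS, hi]⟩
      set i := S.min' hSne with hi
      have hiS : i ∈ S := S.min'_mem hSne
      have hine : y i ≠ y (σ i) := by simpa [hS] using hiS
      have hagree : ∀ j, j < i → y j = y (σ j) := by
        intro j hj
        by_contra hc
        have : j ∈ S := by simp [hS, hc]
        exact absurd (S.min'_le j this) (not_le.mpr hj)
      exact Or.inr ⟨i, hagree, lt_of_le_of_ne (hpc i hagree) hine⟩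
  · rintro (h | ⟨i, h1, h2⟩) i' hi'
    · exact le_of_eq (congrFun h i')
    · rcases lt_trichotomy i' i with hlt | heq | hgt
      · exact le_of_eq (h1 i' hlt)
      · subst heq; exact le_of_lt h2
      · exact absurd (hi' i hgt) (ne_of_lt h2)

/-- **Full lex-leader symmetry-breaking selects exactly one representative per orbit:**
for a subgroup `G` of permutations of `Fin n` acting on assignments by `x ↦ x ∘ π`,
every orbit contains exactly one assignment `y` satisfying `∀ π ∈ G, PC(π, y)`,
namely the unique lexicographically least element of the orbit. -/
theorem full_sbc_unique_representative {n : ℕ} (G : Subgroup (Equiv.Perm (Fin n)))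
    (x : Fin n → Bool) :
    (∃! y : Fin n → Bool,
        (∃ π ∈ G, y = fun i => x (π i)) ∧ ∀ σ ∈ G, PC σ y) ∧
      ∀ y : Fin n → Bool,
        ((∃ π ∈ G, y = fun i => x (π i)) ∧ ∀ σ ∈ G, PC σ y) →
          ∀ z : Fin n → Bool, (∃ π ∈ G, z = fun i => x (π i)) → lexLe y z := by
  classical
  set S : Set (Fin n → Bool) := {z | ∃ π ∈ G, z = fun i => x (π i)} with hSdef
  -- the "least" clause
  have hleast : ∀ y : Fin n → Bool,
      ((∃ π ∈ G, y = fun i => x (π i)) ∧ ∀ σ ∈ G, PC σ y) →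
        ∀ z : Fin n → Bool, (∃ π ∈ G, z = fun i => x (π i)) → lexLe y z := by
    rintro y ⟨⟨ρ, hρ, hy⟩, hpc⟩ z ⟨π, hπ, hz⟩
    have hσ : (ρ⁻¹ * π : Equiv.Perm (Fin n)) ∈ G := mul_mem (inv_mem hρ) hπ
    have hzy : z = fun i => y ((ρ⁻¹ * π) i) := by
      funext i
      simp [hz, hy, Equiv.Perm.mul_apply]
    rw [hzy]
    exact (pc_iff _ y).mp (hpc _ hσ)
  refine ⟨?_, hleast⟩
  -- existence of the lex-least element of the orbit
  have hfin : S.Finite := Set.toFinite S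
  have hne : S.Nonempty := ⟨x, 1, one_mem G, by funext i; simp⟩
  obtain ⟨y, hyS, hymin⟩ := Set.exists_min_image S (fun z => toLex z : (Fin n → Bool) → Lex (Fin n → Bool)) hfin hne
  have hypc : ∀ σ ∈ G, PC σ y := by
    intro σ hσ
    rw [pc_iff]
    have hmem : (fun i => y (σ i)) ∈ S := by
      obtain ⟨π, hπ, hy⟩ := hyS
      exact ⟨π * σ, mul_mem hπ hσ, by funext i; simp [hy, Equiv.Perm.mul_apply]⟩
    exact lexLe_iff.mpr (hymin _ hmem)
  refine ⟨y, ⟨hyS, hypc⟩, ?_⟩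
  intro y' hy'
  have h1 : lexLe y' y := hleast y' hy' y hyS
  have h2 : lexLe y y' := hleast y ⟨hyS, hypc⟩ y' hy'.1
  exact toLex.injective (le_antisymm (lexLe_iff.mp h1) (lexLe_iff.mp h2))
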